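/- arXiv:0807.0817 — 2 statements merged into one kernel-verified Lean document; each statement's English description precedes it below -/
import Mathlib

section
/- Let V be a finite-dimensional vector space over ℚ equipped with a nondegenerate symmetric bilinear form ⟨·,·⟩. If α ∈ V is nonzero and ⟨α,α⟩ = 0, then there exist γ, λ ∈ V such that α = γ + λ, ⟨γ,λ⟩ = 0, ⟨γ,γ⟩ > 0 and ⟨λ,λ⟩ < 0. -/
/-- Let `V` be a finite-dimensional vector space over ℚ with a nondegenerate
symmetric bilinear form. If `α ≠ 0` is isotropic, then `α = γ + lam` with `⟨γ,lam⟩ = 0`,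
`⟨γ,γ⟩ > 0` and `⟨lam,lam⟩ < 0`. -/
theorem stmt1 (V : Type*) [AddCommGroup V] [Module ℚ V] [FiniteDimensional ℚ V]
    (B : V →ₗ[ℚ] V →ₗ[ℚ] ℚ)
    (hsymm : ∀ x y : V, B x y = B y x)
    (hnondeg : ∀ v : V, (∀ w : V, B v w = 0) → v = 0)
    (α : V) (hα : α ≠ 0) (hiso : B α α = 0) :
    ∃ γ lam : V, α = γ + lam ∧ B γ lam = 0 ∧ 0 < B γ γ ∧ B lam lam < 0 := by
  have hw : ∃ w : V, B α w ≠ 0 := by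
    by_contra h
    push_neg at h
    exact hα (hnondeg α h)
  obtain ⟨w, hc⟩ := hw
  set c : ℚ := B α w with hcdef
  set f : V := c⁻¹ • w - (B w w / (2 * c ^ 2)) • α with hf
  refine ⟨(1/2 : ℚ) • α + f, (1/2 : ℚ) • α - f, by module, ?_, ?_, ?_⟩
  · simp only [hf, map_add, map_sub, map_smul, LinearMap.add_apply, LinearMap.sub_apply,
      LinearMap.smul_apply, smul_eq_mul, hiso, hsymm w α, ← hcdef]
    field_simp
    ring
  · have : B ((1/2 : ℚ) • α + f) ((1/2 : ℚ) • α + f) = 1 := by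
      simp only [hf, map_add, map_sub, map_smul, LinearMap.add_apply, LinearMap.sub_apply,
        LinearMap.smul_apply, smul_eq_mul, hiso, hsymm w α, ← hcdef]
      field_simp
      ring
    rw [this]; norm_num
  · have : B ((1/2 : ℚ) • α - f) ((1/2 : ℚ) • α - f) = -1 := by
      simp only [hf, map_add, map_sub, map_smul, LinearMap.add_apply, LinearMap.sub_apply,
        LinearMap.smul_apply, smul_eq_mul, hiso, hsymm w α, ← hcdef]
      field_simp
      ring
    rw [this]; norm_num
end

section
/- Let L be a free ℤ-module of finite rank equipped with a symmetric ℤ-bilinear form B that is nondegenerate and not positive definite. Then for every nonzero v ∈ L there exists γ ∈ L such that B(γ,γ) < 0 and B(v,γ) < 0. -/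
/-- Let `L` be a free ℤ-module of finite rank with a symmetric ℤ-bilinear form
`B` that is nondegenerate and not positive definite. Then for every nonzero `v ∈ L` there
exists `γ ∈ L` with `B γ γ < 0` and `B v γ < 0`. -/
theorem stmt3 (L : Type*) [AddCommGroup L] [Module ℤ L]
    [Module.Free ℤ L] [Module.Finite ℤ L]
    (B : L →ₗ[ℤ] L →ₗ[ℤ] ℤ)
    (hsymm : ∀ x y : L, B x y = B y x)
    (hnondeg : ∀ x : L, (∀ y : L, B x y = 0) → x = 0)
    (hnotpos : ¬ (∀ x : L, x ≠ 0 → 0 < B x x)) :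
    ∀ v : L, v ≠ 0 → ∃ γ : L, B γ γ < 0 ∧ B v γ < 0 := by
  push_neg at hnotpos
  obtain ⟨w, hw0, hww⟩ := hnotpos
  -- Step A: find u with B u u < 0
  have hu : ∃ u : L, B u u < 0 := by
    rcases lt_or_eq_of_le hww with h | h
    · exact ⟨w, h⟩
    · -- B w w = 0; use nondegeneracy
      have hy : ∃ y : L, B w y ≠ 0 := by
        by_contra hc
        push_neg at hc
        exact hw0 (hnondeg w hc)
      obtain ⟨y, hy⟩ := hy
      have hy' : ∃ y' : L, B w y' < 0 := by
        rcases lt_or_gt_of_ne hy with h1 | h1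
        · exact ⟨y, h1⟩
        · refine ⟨-y, ?_⟩
          simp only [map_neg]
          omega
      obtain ⟨y', hy'⟩ := hy'
      set n : ℤ := |B y' y'| + 1 with hn
      refine ⟨n • w + y', ?_⟩
      have hexp : B (n • w + y') (n • w + y') =
          n * n * B w w + n * B w y' + n * B y' w + B y' y' := by
        simp [map_add, map_smul, smul_eq_mul]; ring
      have hs : B y' w = B w y' := hsymm y' w
      have habs : B y' y' ≤ |B y' y'| := le_abs_self _
      have habs2 : (0:ℤ) ≤ |B y' y'| := abs_nonneg _
      rw [hexp, hs, ← h]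
      nlinarith
  obtain ⟨u, hu⟩ := hu
  intro v hv
  rcases lt_trichotomy (B v u) 0 with hc | hc | hc
  · exact ⟨u, hu, hc⟩
  · -- B v u = 0
    have hy : ∃ y : L, B v y ≠ 0 := by
      by_contra hcc
      push_neg at hcc
      exact hv (hnondeg v hcc)
    obtain ⟨y, hy⟩ := hy
    have hy' : ∃ y' : L, B v y' < 0 := by
      rcases lt_or_gt_of_ne hy with h1 | h1
      · exact ⟨y, h1⟩
      · refine ⟨-y, ?_⟩
        simp only [map_neg]
        omega
    obtain ⟨y', hy'⟩ := hy'
    set m : ℤ := 2 * |B u y'| + |B y' y'| + 1 with hm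
    refine ⟨m • u + y', ?_, ?_⟩
    · have hexp : B (m • u + y') (m • u + y') =
          m * m * B u u + m * B u y' + m * B y' u + B y' y' := by
        simp [map_add, map_smul, smul_eq_mul]; ring
      have hs : B y' u = B u y' := hsymm y' u
      have h1 : B u y' ≤ |B u y'| := le_abs_self _
      have h2 : -|B u y'| ≤ B u y' := neg_abs_le _
      have h3 : B y' y' ≤ |B y' y'| := le_abs_self _
      have h4 : (0:ℤ) ≤ |B u y'| := abs_nonneg _
      have h5 : (0:ℤ) ≤ |B y' y'| := abs_nonneg _
      have h6 : B u u ≤ -1 := by omega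
      rw [hexp, hs]
      nlinarith [mul_pos (show (0:ℤ) < m by omega) (show (0:ℤ) < m by omega)]
    · have : B v (m • u + y') = m * B v u + B v y' := by
        simp [map_add, map_smul, smul_eq_mul]
      rw [this, hc]
      omega
  · refine ⟨-u, ?_, ?_⟩
    · simp only [map_neg, neg_neg, LinearMap.neg_apply]
      omega
    · simp only [map_neg]
      omega
end
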